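/- arXiv:2108.08892 — 6 statements merged into one kernel-verified Lean document; each statement's English description precedes it below -/
import Mathlib

section
/- If 0 → A → B → C → 0 is a short exact sequence of finitely generated abelian groups and A is finite, then |tor B| = |A| · |tor C|. -/
/-- For a short exact sequence `0 → A → B → C → 0` of finitely generated abelian groups
with `A` finite, `|tor B| = |A| · |tor C|`. -/
theorem stmt1 (A B C : Type) [AddCommGroup A] [AddCommGroup B] [AddCommGroup C]
    [AddGroup.FG A] [AddGroup.FG B] [AddGroup.FG C] [Finite A]
    (i : A →+ B) (j : B →+ C)
    (hi : Function.Injective i) (hj : Function.Surjective j)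
    (hexact : Function.Exact i j) :
    Nat.card (AddCommGroup.torsion B) =
      Nat.card A * Nat.card (AddCommGroup.torsion C) := by
  -- the restriction of j to torsion subgroups
  have hmap : ∀ x : AddCommGroup.torsion B, j (x : B) ∈ AddCommGroup.torsion C := by
    intro ⟨x, hx⟩
    exact j.isOfFinAddOrder hx
  let f : AddCommGroup.torsion B →+ AddCommGroup.torsion C :=
    ((j.domRestrict (AddCommGroup.torsion B)).codRestrict (AddCommGroup.torsion C) hmap)
  have hfval : ∀ x : AddCommGroup.torsion B, (f x : C) = j (x : B) := fun _ => rfl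
  -- f is surjective
  have hfsurj : Function.Surjective f := by
    rintro ⟨c, hc⟩
    obtain ⟨n, hn, hnc⟩ := (isOfFinAddOrder_iff_nsmul_eq_zero).1 hc
    obtain ⟨b, hb⟩ := hj c
    have h1 : j (n • b) = 0 := by rw [map_nsmul, hb, hnc]
    obtain ⟨a, ha⟩ := (hexact (n • b)).1 h1
    have hia : IsOfFinAddOrder (i a) := i.isOfFinAddOrder (isOfFinAddOrder_of_finite a)
    obtain ⟨m, hm, hma⟩ := (isOfFinAddOrder_iff_nsmul_eq_zero).1 hia
    have hb_tor : IsOfFinAddOrder b := by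
      rw [isOfFinAddOrder_iff_nsmul_eq_zero]
      exact ⟨m * n, Nat.mul_pos hm hn, by rw [mul_smul, ← ha, hma]⟩
    exact ⟨⟨b, hb_tor⟩, Subtype.ext (by simpa [hfval] using hb)⟩
  -- kernel of f is isomorphic to A
  have hAtor : ∀ a : A, i a ∈ AddCommGroup.torsion B := fun a =>
    i.isOfFinAddOrder (isOfFinAddOrder_of_finite a)
  let g : A → f.ker := fun a => ⟨⟨i a, hAtor a⟩, by
    have : j (i a) = 0 := hexact.apply_apply_eq_zero a
    exact Subtype.ext this⟩
  have hgbij : Function.Bijective g := by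
    constructor
    · intro a₁ a₂ h
      apply hi
      exact congrArg (fun x : f.ker => ((x : AddCommGroup.torsion B) : B)) h
    · rintro ⟨⟨b, hb⟩, hbk⟩
      have : j b = 0 := congrArg Subtype.val hbk
      obtain ⟨a, ha⟩ := (hexact b).1 this
      exact ⟨a, Subtype.ext (Subtype.ext ha)⟩
  have h1 : Nat.card (AddCommGroup.torsion B) =
      Nat.card (AddCommGroup.torsion B ⧸ f.ker) * Nat.card f.ker :=
    AddSubgroup.card_eq_card_quotient_mul_card_addSubgroup f.ker
  have h2 : Nat.card (AddCommGroup.torsion B ⧸ f.ker) = Nat.card (AddCommGroup.torsion C) :=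
    Nat.card_congr (QuotientAddGroup.quotientKerEquivOfSurjective f hfsurj).toEquiv
  have h3 : Nat.card f.ker = Nat.card A := (Nat.card_congr (Equiv.ofBijective g hgbij)).symm
  rw [h1, h2, h3, mul_comm]
end

section
/- If 0 → A → B → C → 0 is a short exact sequence of finitely generated abelian groups with A and B both free abelian, then log|tor C| ≤ rk(A) · log e(C), where e(C) is the exponent of the torsion subgroup of C (the maximal order of a torsion element). -/
/-- For a short exact sequence `0 → A → B → C → 0` of finitely generated abelian groups with
`A` and `B` free abelian, `log |tor C| ≤ rk A · log e(C)`, where `e(C)` is the exponent of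
the torsion subgroup of `C`. -/
theorem stmt2 (A B C : Type) [AddCommGroup A] [AddCommGroup B] [AddCommGroup C]
    [AddGroup.FG A] [AddGroup.FG B] [AddGroup.FG C]
    [Module.Free ℤ A] [Module.Free ℤ B]
    (i : A →+ B) (j : B →+ C)
    (hi : Function.Injective i) (hj : Function.Surjective j)
    (hexact : Function.Exact i j) :
    Real.log (Nat.card (AddCommGroup.torsion C)) ≤
      (Module.finrank ℤ A : ℝ) *
        Real.log (AddMonoid.exponent (AddCommGroup.torsion C)) := by
  classical
  haveI : Module.Finite ℤ A := Module.Finite.iff_addGroup_fg.mpr ‹_›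
  haveI : Module.Finite ℤ B := Module.Finite.iff_addGroup_fg.mpr ‹_›
  haveI : Module.Finite ℤ C := Module.Finite.iff_addGroup_fg.mpr ‹_›
  set T := AddCommGroup.torsion C with hT
  -- `T` is a torsion group
  have hTtor : AddMonoid.IsTorsion T := by
    rintro ⟨t, ht⟩
    have ht' : IsOfFinAddOrder t := ht
    rw [isOfFinAddOrder_iff_nsmul_eq_zero] at ht' ⊢
    obtain ⟨n, hn, hn'⟩ := ht' 
    exact ⟨n, hn, Subtype.ext (by simpa using hn')⟩
  -- `T` is finitely generated
  haveI : AddGroup.FG T := by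
    haveI : Module.Finite ℤ (AddSubgroup.toIntSubmodule T) :=
      Module.Finite.iff_fg.mpr ((isNoetherian_def.mp inferInstance) _)
    exact Module.Finite.iff_addGroup_fg.mp
      (by exact ‹Module.Finite ℤ (AddSubgroup.toIntSubmodule T)›)
  haveI hTfin : Finite T := AddCommGroup.finite_of_fg_torsion T hTtor
  set e := AddMonoid.exponent T with he
  have he0 : e ≠ 0 := AddMonoid.exponent_ne_zero_of_finite
  haveI : NeZero e := ⟨he0⟩
  have heT : ∀ t : T, e • t = 0 := fun t => AddMonoid.exponent_nsmul_eq_zero t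
  -- the preimage of `T` in `B`, as a `ℤ`-submodule
  set P : Submodule ℤ B := AddSubgroup.toIntSubmodule (T.comap j) with hP
  have hPmem : ∀ x : B, x ∈ P ↔ j x ∈ T := fun x => Iff.rfl
  -- the map `P → T`, surjective
  set jT : P →+ T :=
    { toFun := fun x => ⟨j x, (hPmem x).mp x.2⟩
      map_zero' := Subtype.ext (by simp)
      map_add' := fun x y => Subtype.ext (by simp) } with hjT
  have hjTsurj : Function.Surjective jT := by
    rintro ⟨t, ht⟩
    obtain ⟨b, hb⟩ := hj t
    exact ⟨⟨b, (hPmem b).mpr (hb ▸ ht)⟩, Subtype.ext hb⟩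
  -- multiplication by `e` maps `P` into the image of `A`, giving an injection `P ↪ A`
  have key : ∀ x : P, ∃ a : A, i a = e • (x : B) := by
    intro x
    refine (hexact _).mp ?_
    have : j (e • (x : B)) = e • j (x : B) := by
      simp
    rw [this]
    have := heT ⟨j x, (hPmem x).mp x.2⟩
    simpa using congrArg Subtype.val this
  choose φf hφf using key
  have hφadd : ∀ x y : P, φf (x + y) = φf x + φf y := by
    intro x y
    apply hi
    simp [hφf, smul_add]
  have hφsmul : ∀ (c : ℤ) (x : P), φf (c • x) = c • φf x := by
    intro c x
    apply hi
    rw [hφf, map_zsmul, hφf]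
    push_cast [Submodule.coe_smul]
    rw [smul_comm]
  set φ : P →ₗ[ℤ] A := { toFun := φf, map_add' := hφadd, map_smul' := hφsmul } with hφdef
  have hφinj : Function.Injective φ := by
    intro x y hxy
    have h1 : e • (x : B) = e • (y : B) := by
      rw [← hφf x, ← hφf y]; exact congrArg i hxy
    have h2 : (e : ℤ) • (x : B) = (e : ℤ) • (y : B) := by
      simpa using h1
    have := smul_right_injective B (by exact_mod_cast he0 : (e : ℤ) ≠ 0) h2
    exact Subtype.ext this
  -- `P` is finite free, and its rank is at most `finrank ℤ A`
  haveI : Module.Finite ℤ P := Module.Finite.iff_fg.mpr ((isNoetherian_def.mp inferInstance) _)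
  haveI : Module.Free ℤ P := Module.free_of_finite_type_torsion_free'
  set m := Module.finrank ℤ P with hm
  have hmn : m ≤ Module.finrank ℤ A := LinearMap.finrank_le_finrank_of_injective hφinj
  -- `T` is a `ZMod e`-module
  letI : Module (ZMod e) T := AddCommGroup.zmodModule heT
  -- basis of `P`
  set b := Module.Free.chooseBasis ℤ P with hb
  have hcardι : Fintype.card (Module.Free.ChooseBasisIndex ℤ P) = m := (Module.finrank_eq_card_chooseBasisIndex ℤ P).symm
  -- surjection `((Module.Free.ChooseBasisIndex ℤ P) → ZMod e) → T`
  have hsurj : Function.Surjective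
      (fun f : Module.Free.ChooseBasisIndex ℤ P → ZMod e => ∑ k, f k • jT (b k)) := by
    intro t
    obtain ⟨x, hx⟩ := hjTsurj t
    refine ⟨fun k => ((b.repr x k : ℤ) : ZMod e), ?_⟩
    have hxsum : x = ∑ k, b.repr x k • b k := (b.sum_repr x).symm
    calc ∑ k, ((b.repr x k : ℤ) : ZMod e) • jT (b k)
        = ∑ k, b.repr x k • jT (b k) := by
          refine Finset.sum_congr rfl fun k _ => ?_
          exact Int.cast_smul_eq_zsmul (ZMod e) (b.repr x k) (jT (b k))
      _ = jT (∑ k, b.repr x k • b k) := by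
          rw [map_sum]
          refine Finset.sum_congr rfl fun k _ => ?_
          exact (map_zsmul jT _ _).symm
      _ = t := by rw [← hxsum, hx]
  -- card bound
  have hcard : Nat.card T ≤ e ^ m := by
    calc Nat.card T ≤ Nat.card ((Module.Free.ChooseBasisIndex ℤ P) → ZMod e) := Nat.card_le_card_of_surjective _ hsurj
      _ = Nat.card (ZMod e) ^ Nat.card (Module.Free.ChooseBasisIndex ℤ P) := Nat.card_fun
      _ = e ^ m := by rw [Nat.card_eq_fintype_card (α := ZMod e), ZMod.card,
            Nat.card_eq_fintype_card, hcardι]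
  -- conclude with logarithms
  have h1e : 1 ≤ e := Nat.one_le_iff_ne_zero.mpr he0
  have hcard' : Nat.card T ≤ e ^ Module.finrank ℤ A :=
    hcard.trans (Nat.pow_le_pow_right h1e hmn)
  have hpos : (0 : ℝ) < (Nat.card T : ℝ) := by exact_mod_cast Nat.card_pos
  calc Real.log (Nat.card T) ≤ Real.log ((e : ℝ) ^ Module.finrank ℤ A) :=
      Real.log_le_log hpos (by exact_mod_cast hcard')
    _ = (Module.finrank ℤ A : ℝ) * Real.log e := Real.log_pow _ _
end

section
/- If 0 → A → B → C → 0 is a short exact sequence of finitely generated abelian groups, then log|tor B| ≥ log|tor A| + log|tor C| − rk(A) · log e(C), where e(C) is the exponent of the torsion subgroup of C. -/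
lemma finTorsion (G : Type) [AddCommGroup G] [AddGroup.FG G] :
    Finite (AddCommGroup.torsion G) := by
  haveI : Module.Finite ℤ G := Module.Finite.iff_addGroup_fg.mpr ‹_›
  haveI : Module.Finite ℤ (Submodule.torsion ℤ G) :=
    Module.Finite.iff_fg.mpr (IsNoetherian.noetherian _)
  haveI : Finite (Submodule.torsion ℤ G) :=
    Module.finite_of_fg_torsion _ (Submodule.torsion_isTorsion)
  rw [← Submodule.torsion_int]
  exact Finite.of_equiv (Submodule.torsion ℤ G) (Equiv.subtypeEquivRight fun x => Iff.rfl)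

lemma cardIneq (A B C : Type) [AddCommGroup A] [AddCommGroup B] [AddCommGroup C]
    [AddGroup.FG A] [AddGroup.FG B] [AddGroup.FG C]
    (i : A →+ B) (j : B →+ C)
    (hi : Function.Injective i) (hj : Function.Surjective j)
    (hexact : Function.Exact i j) :
    Nat.card (AddCommGroup.torsion A) * Nat.card (AddCommGroup.torsion C) ≤
      (AddMonoid.exponent (AddCommGroup.torsion C)) ^ (Module.finrank ℤ A) *
        Nat.card (AddCommGroup.torsion B) := by
  classical
  haveI fA := finTorsion A
  haveI fB := finTorsion B
  haveI fC := finTorsion C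
  set e := AddMonoid.exponent (AddCommGroup.torsion C) with hedef
  have he0 : e ≠ 0 := AddMonoid.ExponentExists.of_finite.exponent_ne_zero
  set r := Module.finrank ℤ A with hrdef
  -- torsion membership facts
  have memtor : ∀ (G : Type) [AddCommGroup G] (x : G),
      x ∈ AddCommGroup.torsion G ↔ ∃ n : ℕ, 0 < n ∧ n • x = 0 := by
    intro G _ x
    exact isOfFinAddOrder_iff_nsmul_eq_zero
  -- the exponent kills torsion C
  have hec : ∀ c : AddCommGroup.torsion C, e • (c : C) = 0 := by
    intro c
    have h := AddMonoid.exponent_nsmul_eq_zero c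
    have := congrArg (Subtype.val) h
    simpa using this
  -- restriction of j to torsion subgroups
  have hjt : ∀ x : AddCommGroup.torsion B, j (x : B) ∈ AddCommGroup.torsion C :=
    fun x => j.isOfFinAddOrder x.2
  let f' : (AddCommGroup.torsion B) →+ (AddCommGroup.torsion C) :=
    ((j.domRestrict (AddCommGroup.torsion B)).codRestrict _ hjt)
  have hf'val : ∀ x : AddCommGroup.torsion B, (f' x : C) = j (x : B) := fun x => rfl
  -- |torsion A| = |ker f'|
  have hcardTA : Nat.card (AddCommGroup.torsion A) = Nat.card f'.ker := by
    apply Nat.card_congr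
    refine Equiv.ofBijective
      (fun a => ⟨⟨i (a : A), i.isOfFinAddOrder a.2⟩, ?_⟩) ⟨?_, ?_⟩
    · have : (f' ⟨i (a : A), i.isOfFinAddOrder a.2⟩ : C) = 0 := by
        rw [hf'val]; exact (hexact _).mpr ⟨a, rfl⟩
      exact AddMonoidHom.mem_ker.mpr (Subtype.ext this)
    · intro a a' h
      have : i (a : A) = i (a' : A) := congrArg (fun x : f'.ker => ((x : AddCommGroup.torsion B) : B)) h
      exact Subtype.ext (hi this)
    · rintro ⟨⟨x, hx⟩, hker⟩
      have hx0 : j x = 0 := by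
        have := congrArg Subtype.val hker
        rw [hf'val] at this
        simpa using this
      obtain ⟨a, ha⟩ := (hexact x).mp hx0
      have hator : a ∈ AddCommGroup.torsion A := by
        rw [AddCommGroup.mem_torsion, isOfFinAddOrder_iff_nsmul_eq_zero] at hx ⊢
        obtain ⟨n, hn, hnx⟩ := hx
        refine ⟨n, hn, hi ?_⟩
        rw [map_nsmul, ha, hnx, map_zero]
      exact ⟨⟨a, hator⟩, Subtype.ext (Subtype.ext ha)⟩
  -- |torsion B| = |range f'| * |ker f'|
  have hcardTB : Nat.card (AddCommGroup.torsion B)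
      = Nat.card f'.range * Nat.card f'.ker := by
    rw [AddSubgroup.card_eq_card_quotient_mul_card_addSubgroup f'.ker]
    congr 1
    exact Nat.card_congr (QuotientAddGroup.quotientKerEquivRange f').toEquiv
  -- |torsion C| ≤ e^r * |range f'|
  have hcardTC : Nat.card (AddCommGroup.torsion C) ≤ e ^ r * Nat.card f'.range := by
    have : Nat.card (AddCommGroup.torsion C) ≤
        e ^ (Module.finrank ℤ A) * Nat.card f'.range := by
      classical
      haveI : NeZero e := ⟨he0⟩
      haveI : Module.Finite ℤ A := Module.Finite.iff_addGroup_fg.mpr ‹_›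
      set T := Submodule.torsion ℤ A with hT
      have memT : ∀ x : A, x ∈ T ↔ x ∈ AddCommGroup.torsion A := by
        intro x
        rw [← Submodule.torsion_int]
        exact Iff.rfl
      -- the free quotient
      haveI : Module.Free ℤ (A ⧸ T) := Module.free_of_finite_type_torsion_free'
      set N : Submodule ℤ (A ⧸ T) :=
        LinearMap.range ((e : ℤ) • (LinearMap.id : (A ⧸ T) →ₗ[ℤ] (A ⧸ T))) with hN
      have hNmem : ∀ x : A ⧸ T, x ∈ N ↔ ∃ y, (e : ℤ) • y = x := by
        intro x
        simp [hN, LinearMap.mem_range]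
      set Q := (A ⧸ T) ⧸ N with hQ
      let π : A →+ Q := (N.mkQ.comp T.mkQ).toAddMonoidHom
      have hπ : ∀ x : A, π x = N.mkQ (T.mkQ x) := fun x => rfl
      have hπe : ∀ x : A, π (e • x) = 0 := by
        intro x
        rw [hπ, map_nsmul, map_nsmul, ← natCast_zsmul]
        exact (Submodule.Quotient.mk_eq_zero N).mpr ((hNmem _).mpr ⟨T.mkQ x, rfl⟩)
      -- rank computation
      have hrQ : Module.finrank ℤ (A ⧸ T) = Module.finrank ℤ A := by
        have hrank := rank_quotient_eq_of_le_torsion (le_refl T)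
        simp only [Module.finrank, hrank]
      -- cardinality of Q
      set ι := Module.Free.ChooseBasisIndex ℤ (A ⧸ T) with hι
      let b : Module.Basis ι ℤ (A ⧸ T) := Module.Free.chooseBasis ℤ (A ⧸ T)
      have hcardι : Fintype.card ι = Module.finrank ℤ A := by
        rw [← hrQ, Module.finrank_eq_card_chooseBasisIndex]
      let g : (ι → ZMod e) → Q := fun x => N.mkQ (∑ k, ((x k).val : ℤ) • b k)
      have hg : Function.Surjective g := by
        intro q
        obtain ⟨a', rfl⟩ := Submodule.mkQ_surjective N q
        refine ⟨fun k => ((b.repr a' k : ℤ) : ZMod e), ?_⟩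
        show N.mkQ _ = N.mkQ a'
        have key : ∀ k : ι, (((((b.repr a' k : ℤ) : ZMod e)).val : ℤ)) =
            b.repr a' k + (e : ℤ) * (-(b.repr a' k / e)) := by
          intro k
          rw [ZMod.val_intCast, Int.emod_def]
          ring
        have hsum : (∑ k, (((((b.repr a' k : ℤ) : ZMod e)).val : ℤ)) • b k)
            = a' + (e : ℤ) • (∑ k, (-(b.repr a' k / e)) • b k) := by
          simp only [key, add_smul, Finset.sum_add_distrib, mul_smul]
          rw [← Finset.smul_sum, b.sum_repr]
        rw [hsum, map_add, add_eq_left]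
        exact (Submodule.Quotient.mk_eq_zero N).mpr ((hNmem _).mpr ⟨_, rfl⟩)
      haveI finQ : Finite Q := Finite.of_surjective g hg
      have hQcard : Nat.card Q ≤ e ^ Module.finrank ℤ A := by
        calc Nat.card Q ≤ Nat.card (ι → ZMod e) := Nat.card_le_card_of_surjective g hg
          _ = e ^ Module.finrank ℤ A := by
              rw [Nat.card_eq_fintype_card, Fintype.card_fun, ZMod.card, hcardι]
      have hlift : ∀ c : AddCommGroup.torsion C,
          ∃ p : A × B, j p.2 = (c : C) ∧ i p.1 = e • p.2 := by
        intro c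
        obtain ⟨bb, hbb⟩ := hj (c : C)
        have h0 : j (e • bb) = 0 := by rw [map_nsmul, hbb, hec]
        obtain ⟨a, ha⟩ := (hexact _).mp h0
        exact ⟨(a, bb), hbb, ha⟩
      have wd : ∀ (a a' : A) (bb bb' : B), j bb = j bb' → i a = e • bb → i a' = e • bb' →
          π a = π a' := by
        intro a a' bb bb' hjb hab hab'
        have h0 : j (bb - bb') = 0 := by rw [map_sub, hjb, sub_self]
        obtain ⟨a₀, ha₀⟩ := (hexact _).mp h0
        have heq : i (a - a') = i (e • a₀) := by
          rw [map_sub, hab, hab', map_nsmul, ha₀, smul_sub]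
        have h2 : a - a' = e • a₀ := hi heq
        have h3 : π (a - a') = 0 := by rw [h2]; exact hπe a₀
        rw [map_sub, sub_eq_zero] at h3
        exact h3
      let ψ : AddCommGroup.torsion C →+ Q := AddMonoidHom.mk'
        (fun c => π (hlift c).choose.1) (by
          intro c₁ c₂
          obtain ⟨h1, h1'⟩ := (hlift c₁).choose_spec
          obtain ⟨h2, h2'⟩ := (hlift c₂).choose_spec
          obtain ⟨h3, h3'⟩ := (hlift (c₁ + c₂)).choose_spec
          rw [← map_add]
          refine wd _ _ _ ((hlift c₁).choose.2 + (hlift c₂).choose.2) ?_ h3' ?_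
          · rw [h3, map_add, h1, h2]
            rfl
          · rw [map_add, h1', h2', smul_add])
      have hψval : ∀ c : AddCommGroup.torsion C, ψ c = π (hlift c).choose.1 := fun c => rfl
      have hker : ψ.ker = f'.range := by
        ext c
        constructor
        · intro hc
          obtain ⟨hb, ha⟩ := (hlift c).choose_spec
          have hc0 : π (hlift c).choose.1 = 0 := hc
          rw [hπ] at hc0
          obtain ⟨y, hy⟩ := (hNmem _).mp ((Submodule.Quotient.mk_eq_zero N).mp hc0)
          obtain ⟨a'', rfl⟩ := Submodule.mkQ_surjective T y
          have hmk0 : T.mkQ ((hlift c).choose.1 - e • a'') = 0 := by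
            rw [map_sub, map_nsmul, ← natCast_zsmul, hy, sub_self]
          have ht : ((hlift c).choose.1 - e • a'') ∈ T :=
            (Submodule.Quotient.mk_eq_zero T).mp hmk0
          set t := (hlift c).choose.1 - e • a'' with htdef
          set b' := (hlift c).choose.2 - i a'' with hb'def
          have hjb' : j b' = (c : C) := by
            have : j (i a'') = 0 := (hexact _).mpr ⟨a'', rfl⟩
            rw [hb'def, map_sub, hb, this, sub_zero]
          have heb' : e • b' = i t := by
            rw [hb'def, htdef, smul_sub, ← ha, map_sub, map_nsmul]
          have hb'tor : b' ∈ AddCommGroup.torsion B := by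
            obtain ⟨n, hn, hnt⟩ := isOfFinAddOrder_iff_nsmul_eq_zero.mp ((memT t).mp ht)
            rw [AddCommGroup.mem_torsion, isOfFinAddOrder_iff_nsmul_eq_zero]
            refine ⟨n * e, Nat.mul_pos hn (Nat.pos_of_ne_zero he0), ?_⟩
            rw [mul_smul, heb', ← map_nsmul, hnt, map_zero]
          exact ⟨⟨b', hb'tor⟩, Subtype.ext (by rw [hf'val]; exact hjb')⟩
        · rintro ⟨tb, rfl⟩
          obtain ⟨hb, ha⟩ := (hlift (f' tb)).choose_spec
          have h0 : j (e • (tb : B)) = 0 := by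
            rw [map_nsmul, ← hf'val, hec]
          obtain ⟨a', ha'⟩ := (hexact _).mp h0
          have hψ2 : ψ (f' tb) = π a' := by
            rw [hψval]
            exact wd _ _ _ (tb : B) (by rw [hb, hf'val]) ha ha'
          have ha'tor : a' ∈ AddCommGroup.torsion A := by
            obtain ⟨n, hn, hnt⟩ := isOfFinAddOrder_iff_nsmul_eq_zero.mp tb.2
            rw [AddCommGroup.mem_torsion, isOfFinAddOrder_iff_nsmul_eq_zero]
            refine ⟨n, hn, hi ?_⟩
            rw [map_nsmul, ha', map_zero, smul_comm, hnt, smul_zero]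
          have hmk : T.mkQ a' = 0 :=
            (Submodule.Quotient.mk_eq_zero T).mpr ((memT a').mpr ha'tor)
          show ψ (f' tb) = 0
          rw [hψ2, hπ, hmk, map_zero]
      have h1 : Nat.card (AddCommGroup.torsion C) = Nat.card ψ.range * Nat.card ψ.ker := by
        rw [AddSubgroup.card_eq_card_quotient_mul_card_addSubgroup ψ.ker]
        congr 1
        exact Nat.card_congr (QuotientAddGroup.quotientKerEquivRange ψ).toEquiv
      have h2 : Nat.card ψ.range ≤ Nat.card Q :=
        Nat.card_le_card_of_injective _ Subtype.val_injective
      rw [h1, hker]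
      exact Nat.mul_le_mul (le_trans h2 hQcard) le_rfl
    exact this
  calc Nat.card (AddCommGroup.torsion A) * Nat.card (AddCommGroup.torsion C)
      ≤ Nat.card (AddCommGroup.torsion A) * (e ^ r * Nat.card f'.range) :=
        Nat.mul_le_mul_left _ hcardTC
    _ = e ^ r * (Nat.card f'.range * Nat.card f'.ker) := by rw [hcardTA]; ring
    _ = e ^ r * Nat.card (AddCommGroup.torsion B) := by rw [hcardTB]

/-- For a short exact sequence `0 → A → B → C → 0` of finitely generated abelian groups,
`log |tor B| ≥ log |tor A| + log |tor C| − rk A · log e(C)`. -/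
theorem stmt3 (A B C : Type) [AddCommGroup A] [AddCommGroup B] [AddCommGroup C]
    [AddGroup.FG A] [AddGroup.FG B] [AddGroup.FG C]
    (i : A →+ B) (j : B →+ C)
    (hi : Function.Injective i) (hj : Function.Surjective j)
    (hexact : Function.Exact i j) :
    Real.log (Nat.card (AddCommGroup.torsion B)) ≥
      Real.log (Nat.card (AddCommGroup.torsion A)) +
        Real.log (Nat.card (AddCommGroup.torsion C)) -
        (Module.finrank ℤ A : ℝ) *
          Real.log (AddMonoid.exponent (AddCommGroup.torsion C)) := by
  haveI fA := finTorsion A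
  haveI fB := finTorsion B
  haveI fC := finTorsion C
  have hnat := cardIneq A B C i j hi hj hexact
  set e := AddMonoid.exponent (AddCommGroup.torsion C) with hedef
  set r := Module.finrank ℤ A with hrdef
  have he0 : e ≠ 0 := AddMonoid.ExponentExists.of_finite.exponent_ne_zero
  have hA0 : 0 < Nat.card (AddCommGroup.torsion A) := Nat.card_pos
  have hB0 : 0 < Nat.card (AddCommGroup.torsion B) := Nat.card_pos
  have hC0 : 0 < Nat.card (AddCommGroup.torsion C) := Nat.card_pos
  rw [ge_iff_le, sub_le_iff_le_add]
  have hcast : ((Nat.card (AddCommGroup.torsion A) * Nat.card (AddCommGroup.torsion C) : ℕ) : ℝ)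
      ≤ ((e ^ r * Nat.card (AddCommGroup.torsion B) : ℕ) : ℝ) := Nat.cast_le.mpr hnat
  have hlog := Real.log_le_log (by positivity) hcast
  push_cast at hlog
  rw [Real.log_mul (by positivity) (by positivity),
    Real.log_mul (by positivity) (by positivity), Real.log_pow] at hlog
  linarith
end

section
/- For a short exact sequence 0 → A → B → C → 0 of finitely generated abelian groups with j : B → C, the quotient C / j(tor B) is isomorphic to the quotient of a free abelian group B/tor B by the image of A/tor A, and in particular the torsion subgroup of C/j(tor B) has order at most e(C)^{rk A}. -/
/-- For a short exact sequence `0 → A → B → C → 0` of finitely generated abelian groups,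
`C / j(tor B)` is isomorphic to the quotient of the free abelian group `B/tor B` by the image
of `A/tor A` (i.e. by the image of `A` in `B/tor B`), and the torsion subgroup of
`C/j(tor B)` has order at most `e(C)^{rk A}`. -/
theorem stmt5 (A B C : Type) [AddCommGroup A] [AddCommGroup B] [AddCommGroup C]
    [AddGroup.FG A] [AddGroup.FG B] [AddGroup.FG C]
    (i : A →+ B) (j : B →+ C)
    (hi : Function.Injective i) (hj : Function.Surjective j)
    (hexact : Function.Exact i j) :
    Nonempty ((C ⧸ (AddCommGroup.torsion B).map j) ≃+
      ((B ⧸ AddCommGroup.torsion B) ⧸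
        ((QuotientAddGroup.mk' (AddCommGroup.torsion B)).comp i).range)) ∧
    Nat.card (AddCommGroup.torsion (C ⧸ (AddCommGroup.torsion B).map j)) ≤
      (AddMonoid.exponent (AddCommGroup.torsion C)) ^ (Module.finrank ℤ A) := by
  classical
  have hker : ∀ x : B, j x = 0 ↔ x ∈ i.range := by
    intro x
    rw [hexact x, AddMonoidHom.mem_range]
    exact Iff.rfl
  constructor
  · -- Part 1: the isomorphism
    set N : AddSubgroup B := AddCommGroup.torsion B ⊔ i.range with hN
    let φ₁ : B →+ (C ⧸ (AddCommGroup.torsion B).map j) :=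
      (QuotientAddGroup.mk' ((AddCommGroup.torsion B).map j)).comp j
    have hφ₁ : Function.Surjective φ₁ :=
      (QuotientAddGroup.mk'_surjective _).comp hj
    have hkerφ₁ : φ₁.ker = N := by
      apply le_antisymm
      · intro b hb
        have hb' : j b ∈ (AddCommGroup.torsion B).map j := by
          have : QuotientAddGroup.mk' ((AddCommGroup.torsion B).map j) (j b) = 0 := hb
          rwa [QuotientAddGroup.mk'_apply, QuotientAddGroup.eq_zero_iff] at this
        obtain ⟨t, ht, hjt⟩ := hb'
        have h1 : b - t ∈ i.range := by
          apply (hker _).mp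
          rw [map_sub, hjt, sub_self]
        have : t + (b - t) ∈ N :=
          N.add_mem (AddSubgroup.mem_sup_left ht) (AddSubgroup.mem_sup_right h1)
        simpa using this
      · rw [hN]
        apply sup_le
        · intro t ht
          have : j t ∈ (AddCommGroup.torsion B).map j := ⟨t, ht, rfl⟩
          show QuotientAddGroup.mk' _ (j t) = 0
          rwa [QuotientAddGroup.mk'_apply, QuotientAddGroup.eq_zero_iff]
        · rintro _ ⟨a, rfl⟩
          show QuotientAddGroup.mk' _ (j (i a)) = 0
          rw [hexact.apply_apply_eq_zero a, map_zero]
    let φ₂ : B →+ ((B ⧸ AddCommGroup.torsion B) ⧸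
        ((QuotientAddGroup.mk' (AddCommGroup.torsion B)).comp i).range) :=
      (QuotientAddGroup.mk' _).comp (QuotientAddGroup.mk' (AddCommGroup.torsion B))
    have hφ₂ : Function.Surjective φ₂ :=
      (QuotientAddGroup.mk'_surjective _).comp (QuotientAddGroup.mk'_surjective _)
    have hkerφ₂ : φ₂.ker = N := by
      apply le_antisymm
      · intro b hb
        have hb' : (QuotientAddGroup.mk' (AddCommGroup.torsion B)) b ∈
            ((QuotientAddGroup.mk' (AddCommGroup.torsion B)).comp i).range := by
          have : QuotientAddGroup.mk' _ ((QuotientAddGroup.mk' (AddCommGroup.torsion B)) b) = 0 := hb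
          rwa [QuotientAddGroup.mk'_apply, QuotientAddGroup.eq_zero_iff] at this
        obtain ⟨a, haa⟩ := hb'
        have h1 : i a - b ∈ AddCommGroup.torsion B := by
          have : (QuotientAddGroup.mk (i a) : B ⧸ AddCommGroup.torsion B)
              = QuotientAddGroup.mk b := haa
          rwa [QuotientAddGroup.eq_iff_sub_mem] at this
        have : (-(i a - b)) + i a ∈ N :=
          N.add_mem (AddSubgroup.mem_sup_left ((AddCommGroup.torsion B).neg_mem h1))
            (AddSubgroup.mem_sup_right ⟨a, rfl⟩)
        simpa using this
      · rw [hN]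
        apply sup_le
        · intro t ht
          show QuotientAddGroup.mk' _ ((QuotientAddGroup.mk' (AddCommGroup.torsion B)) t) = 0
          have : (QuotientAddGroup.mk' (AddCommGroup.torsion B)) t = 0 := by
            rw [QuotientAddGroup.mk'_apply, QuotientAddGroup.eq_zero_iff]
            exact ht
          rw [this, map_zero]
        · rintro _ ⟨a, rfl⟩
          show QuotientAddGroup.mk' _ ((QuotientAddGroup.mk' (AddCommGroup.torsion B)) (i a)) = 0
          rw [QuotientAddGroup.mk'_apply, QuotientAddGroup.eq_zero_iff]
          exact ⟨a, rfl⟩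
    exact ⟨((QuotientAddGroup.quotientKerEquivOfSurjective φ₁ hφ₁).symm.trans
      (QuotientAddGroup.quotientAddEquivOfEq (hkerφ₁.trans hkerφ₂.symm))).trans
      (QuotientAddGroup.quotientKerEquivOfSurjective φ₂ hφ₂)⟩
  · -- Part 2: the cardinality bound
    haveI : Module.Finite ℤ A := Module.Finite.iff_addGroup_fg.mpr ‹AddGroup.FG A›
    haveI : Module.Finite ℤ C := Module.Finite.iff_addGroup_fg.mpr ‹AddGroup.FG C›
    set e := AddMonoid.exponent (AddCommGroup.torsion C) with he
    -- the torsion subgroup of C is finite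
    haveI : Module.Finite ℤ (Submodule.torsion ℤ C) :=
      Module.Finite.iff_fg.mpr (IsNoetherian.noetherian (Submodule.torsion ℤ C))
    haveI hFG : AddGroup.FG (AddCommGroup.torsion C) := by
      rw [← Submodule.torsion_int]
      exact Module.Finite.iff_addGroup_fg.mp ‹_›
    haveI hFinTor : Finite (AddCommGroup.torsion C) := by
      apply AddCommGroup.finite_of_fg_torsion
      intro x
      obtain ⟨n, hn, h0⟩ := isOfFinAddOrder_iff_nsmul_eq_zero.mp x.2
      exact isOfFinAddOrder_iff_nsmul_eq_zero.mpr ⟨n, hn, Subtype.ext (by simpa using h0)⟩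
    have hene : e ≠ 0 := AddMonoid.exponent_ne_zero_of_finite
    haveI : NeZero e := ⟨hene⟩
    have he1 : 1 ≤ e := Nat.one_le_iff_ne_zero.mpr hene
    -- every torsion element of C is killed by e
    have k1 : ∀ c : C, c ∈ AddCommGroup.torsion C → (e : ℤ) • c = 0 := by
      intro c hc
      have := AddMonoid.exponent_nsmul_eq_zero (⟨c, hc⟩ : AddCommGroup.torsion C)
      have h2 : e • c = 0 := by simpa using congrArg Subtype.val this
      rw [natCast_zsmul]
      exact h2
    -- torsion elements of the quotient lift to torsion elements of C
    have k2 : ∀ c : C,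
        IsOfFinAddOrder (QuotientAddGroup.mk c : C ⧸ (AddCommGroup.torsion B).map j) →
        c ∈ AddCommGroup.torsion C := by
      intro c hc
      obtain ⟨n, hn, h0⟩ := isOfFinAddOrder_iff_nsmul_eq_zero.mp hc
      have h1 : n • c ∈ (AddCommGroup.torsion B).map j := by
        have : (QuotientAddGroup.mk (n • c) : C ⧸ (AddCommGroup.torsion B).map j) = 0 := by
          simpa using h0
        rwa [QuotientAddGroup.eq_zero_iff] at this
      obtain ⟨t, ht, hjt⟩ := h1
      obtain ⟨m, hm, hmt⟩ := isOfFinAddOrder_iff_nsmul_eq_zero.mp ht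
      refine isOfFinAddOrder_iff_nsmul_eq_zero.mpr ⟨m * n, Nat.mul_pos hm hn, ?_⟩
      calc (m * n) • c = m • (n • c) := mul_smul m n c
        _ = m • j t := by rw [hjt]
        _ = j (m • t) := by rw [map_nsmul]
        _ = j 0 := by rw [hmt]
        _ = 0 := map_zero j
    -- choose lifts for every torsion element of the quotient
    have key : ∀ t : AddCommGroup.torsion (C ⧸ (AddCommGroup.torsion B).map j),
        ∃ (c : C) (b : B) (a : A),
          (QuotientAddGroup.mk c : C ⧸ (AddCommGroup.torsion B).map j) = (t : _) ∧
          j b = c ∧ i a = (e : ℤ) • b := by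
      rintro ⟨t, ht⟩
      obtain ⟨c, rfl⟩ := QuotientAddGroup.mk_surjective t
      obtain ⟨b, rfl⟩ := hj c
      have hcC : j b ∈ AddCommGroup.torsion C := k2 _ ht
      have hjb : j ((e : ℤ) • b) = 0 := by rw [map_zsmul, k1 _ hcC]
      obtain ⟨a, ha⟩ := (hker _).mp hjb
      exact ⟨j b, b, a, rfl, rfl, ha⟩
    choose cf bf af hcf hbf haf using key
    -- the free quotient A / tor A
    haveI : Module.Finite ℤ (A ⧸ Submodule.torsion ℤ A) := Module.Finite.quotient ℤ _
    haveI : Module.Free ℤ (A ⧸ Submodule.torsion ℤ A) :=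
      Module.free_of_finite_type_torsion_free'
    set ι := Module.Free.ChooseBasisIndex ℤ (A ⧸ Submodule.torsion ℤ A) with hι
    set bA : Module.Basis ι ℤ (A ⧸ Submodule.torsion ℤ A) :=
      Module.Free.chooseBasis ℤ (A ⧸ Submodule.torsion ℤ A) with hbA
    set f : AddCommGroup.torsion (C ⧸ (AddCommGroup.torsion B).map j) → (ι → ZMod e) :=
      fun t k => ((bA.repr (Submodule.Quotient.mk (af t)) k : ℤ) : ZMod e) with hf
    have hfinj : Function.Injective f := by
      intro t₁ t₂ hft
      set u : A ⧸ Submodule.torsion ℤ A := Submodule.Quotient.mk (af t₁ - af t₂) with hu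
      have hrepr : ∀ k, (e : ℤ) ∣ bA.repr u k := by
        intro k
        have husub : u = Submodule.Quotient.mk (af t₁) - Submodule.Quotient.mk (af t₂) := by
          rw [hu, Submodule.Quotient.mk_sub]
        have h1 : ((bA.repr u k : ℤ) : ZMod e) = 0 := by
          have hthis := congrFun hft k
          simp only [hf] at hthis
          have hk : bA.repr u k = bA.repr (Submodule.Quotient.mk (af t₁)) k
              - bA.repr (Submodule.Quotient.mk (af t₂)) k := by
            rw [husub, map_sub, Finsupp.sub_apply]
          rw [hk, Int.cast_sub, hthis, sub_self]
        exact_mod_cast (ZMod.intCast_zmod_eq_zero_iff_dvd _ e).mp h1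
      set v : A ⧸ Submodule.torsion ℤ A := ∑ k, (bA.repr u k / (e : ℤ)) • bA k with hv
      have hev : (e : ℤ) • v = u := by
        rw [hv, Finset.smul_sum]
        conv_rhs => rw [← bA.sum_repr u]
        refine Finset.sum_congr rfl fun k _ => ?_
        rw [smul_smul, Int.mul_ediv_cancel' (hrepr k)]
      obtain ⟨a₀, ha₀⟩ := Submodule.Quotient.mk_surjective _ v
      have htor : af t₁ - af t₂ - (e : ℤ) • a₀ ∈ Submodule.torsion ℤ A := by
        rw [← Submodule.Quotient.mk_eq_zero]
        have : (Submodule.Quotient.mk (af t₁ - af t₂ - (e : ℤ) • a₀) :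
            A ⧸ Submodule.torsion ℤ A) = u - (e : ℤ) • v := by
          rw [Submodule.Quotient.mk_sub, Submodule.Quotient.mk_smul, ha₀, hu]
        rw [this, hev, sub_self]
      obtain ⟨m, hmx⟩ := htor
      have hm0 : (m : ℤ) ≠ 0 := nonZeroDivisors.coe_ne_zero m
      have hmx' : (m : ℤ) • (af t₁ - af t₂ - (e : ℤ) • a₀) = 0 := hmx
      have hw : ((m : ℤ) * e) • (bf t₁ - bf t₂ - i a₀) = 0 := by
        have h2 := congrArg i hmx'
        rw [map_zsmul, map_zero, map_sub, map_sub, map_zsmul, haf t₁, haf t₂] at h2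
        rw [mul_smul]
        calc (m : ℤ) • (e : ℤ) • (bf t₁ - bf t₂ - i a₀)
            = (m : ℤ) • ((e : ℤ) • bf t₁ - (e : ℤ) • bf t₂ - (e : ℤ) • i a₀) := by
              simp [smul_sub]
          _ = 0 := h2
      have hwB : bf t₁ - bf t₂ - i a₀ ∈ AddCommGroup.torsion B :=
        isOfFinAddOrder_iff_zsmul_eq_zero.mpr
          ⟨(m : ℤ) * e, mul_ne_zero hm0 (by exact_mod_cast hene), hw⟩
      have hjw : j (bf t₁ - bf t₂ - i a₀) = cf t₁ - cf t₂ := by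
        rw [map_sub, map_sub, hbf t₁, hbf t₂, hexact.apply_apply_eq_zero a₀, sub_zero]
      have hq : (QuotientAddGroup.mk (cf t₁) : C ⧸ (AddCommGroup.torsion B).map j)
          = QuotientAddGroup.mk (cf t₂) := by
        rw [QuotientAddGroup.eq_iff_sub_mem]
        exact ⟨bf t₁ - bf t₂ - i a₀, hwB, hjw⟩
      apply Subtype.ext
      rw [← hcf t₁, ← hcf t₂]
      exact hq
    calc Nat.card (AddCommGroup.torsion (C ⧸ (AddCommGroup.torsion B).map j))
        ≤ Nat.card (ι → ZMod e) := Nat.card_le_card_of_injective f hfinj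
      _ = e ^ Module.finrank ℤ (A ⧸ Submodule.torsion ℤ A) := by
          rw [Nat.card_fun, Nat.card_zmod, Nat.card_eq_fintype_card,
            Module.finrank_eq_card_chooseBasisIndex]
      _ ≤ e ^ Module.finrank ℤ A :=
          Nat.pow_le_pow_right he1 (Submodule.finrank_quotient_le _)
end

section
/- Let f : ℤᵃ → ℤᵇ be a homomorphism of free abelian groups with ‖f‖ ≤ K (operator norm of f ⊗ ℝ, K ≥ 1). Then the torsion subgroup of coker f has order at most K^{min(a,b)}; equivalently log|tor(coker f)| ≤ min(a,b) · log K. -/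
open Matrix Submodule

lemma aux_toLin'_int_injective {n : ℕ} (M : Matrix (Fin n) (Fin n) ℤ) (hM : M.det ≠ 0) :
    Function.Injective (Matrix.toLin' M) := by
  intro x y h
  simp only [Matrix.toLin'_apply] at h
  have h2 : M.adjugate *ᵥ (M *ᵥ x) = M.adjugate *ᵥ (M *ᵥ y) := by rw [h]
  simp only [Matrix.mulVec_mulVec, Matrix.adjugate_mul, Matrix.smul_mulVec,
    Matrix.one_mulVec] at h2
  exact smul_right_injective _ hM h2

lemma aux_card_quot_eq_natAbs_det {n : ℕ} (M : Matrix (Fin n) (Fin n) ℤ) (hM : M.det ≠ 0) :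
    Nat.card ((Fin n → ℤ) ⧸ LinearMap.range (Matrix.toLin' M)) = M.det.natAbs := by
  classical
  set N := LinearMap.range (Matrix.toLin' M) with hNdef
  have hinj := aux_toLin'_int_injective M hM
  let e : (Fin n → ℤ) ≃ₗ[ℤ] N := LinearEquiv.ofInjective _ hinj
  obtain ⟨m, snf⟩ := N.smithNormalForm (Pi.basisFun ℤ (Fin n))
  have hm : m = n := by
    have hc := card_eq_of_linearEquiv ℤ (snf.bN.equivFun.symm.trans e.symm)
    simpa using hc
  subst hm
  have hbij : Function.Bijective snf.f :=
    (Finite.injective_iff_bijective).mp snf.f.injective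
  let fe : Fin m ≃ Fin m := Equiv.ofBijective snf.f hbij
  let e'' : (Fin m → ℤ) ≃ₗ[ℤ] N := snf.bM.equiv (snf.bN.reindex fe) (Equiv.refl _)
  -- determinant of subtype ∘ e'' is ∏ a i up to sign
  have hdiag : LinearMap.toMatrix snf.bM snf.bM (N.subtype ∘ₗ (e'' : (Fin m → ℤ) →ₗ[ℤ] N))
      = Matrix.diagonal (fun i => snf.a (fe.symm i)) := by
    ext i j
    rw [LinearMap.toMatrix_apply]
    have h1 : e'' (snf.bM j) = (snf.bN.reindex fe) j := snf.bM.equiv_apply _ _ _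
    have h2 : ((snf.bN.reindex fe) j : Fin m → ℤ) = snf.a (fe.symm j) • snf.bM (snf.f (fe.symm j)) := by
      rw [Module.Basis.reindex_apply, snf.snf]
    have h3 : snf.f (fe.symm j) = j := fe.apply_symm_apply j
    simp only [LinearMap.comp_apply, LinearEquiv.coe_coe, h1, Submodule.coe_subtype, h2, h3,
      _root_.map_smul, Module.Basis.repr_self, Finsupp.smul_single, smul_eq_mul, mul_one]
    rw [Finsupp.single_apply, Matrix.diagonal_apply]
    by_cases h : i = j <;> simp [h, eq_comm]
  have hdet2 : LinearMap.det (N.subtype ∘ₗ (e'' : (Fin m → ℤ) →ₗ[ℤ] N))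
      = ∏ i, snf.a i := by
    rw [← LinearMap.det_toMatrix snf.bM, hdiag, Matrix.det_diagonal]
    exact Equiv.prod_comp fe.symm snf.a
  have hdet1 : LinearMap.det (N.subtype ∘ₗ (e : (Fin m → ℤ) →ₗ[ℤ] N)) = M.det := by
    have : N.subtype ∘ₗ (e : (Fin m → ℤ) →ₗ[ℤ] N) = Matrix.toLin' M := by
      ext x
      rfl
    rw [this, LinearMap.det_toLin']
  have hassoc := LinearMap.associated_det_comp_equiv N.subtype e e''
  have hnatAbs : M.det.natAbs = (∏ i, snf.a i).natAbs := by
    rw [← hdet1, ← hdet2]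
    exact Int.natAbs_eq_iff_associated.mpr hassoc
  have hindex := snf.toAddSubgroup_index_eq_pow_mul_prod
  calc Nat.card ((Fin m → ℤ) ⧸ N) = N.cardQuot := (Submodule.cardQuot_apply N).symm
    _ = N.toAddSubgroup.index := rfl
    _ = M.det.natAbs := by
        rw [hindex, hnatAbs]
        simp only [Ideal.span_singleton_toAddSubgroup_eq_zmultiples, Int.index_zmultiples,
          Fintype.card_fin, Nat.sub_self, pow_zero, one_mul]
        exact (map_prod Int.natAbsHom _ _).symm

lemma aux_sum_extend_mul {R : Type*} [CommRing R] {a r : ℕ} {g : Fin r → Fin a}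
    (hg : Function.Injective g) (f : Fin a → R) (x : Fin r → R) :
    ∑ j, f j * Function.extend g x 0 j = ∑ k, f (g k) * x k := by
  classical
  have h0 : ∀ j ∈ Finset.univ, j ∉ Finset.image g Finset.univ →
      f j * Function.extend g x 0 j = 0 := by
    intro j _ hj
    have : ¬∃ k, g k = j := by simpa using hj
    rw [Function.extend_apply' x (0 : Fin a → R) j this]
    simp
  calc ∑ j, f j * Function.extend g x 0 j
      = ∑ j ∈ Finset.image g Finset.univ, f j * Function.extend g x 0 j :=
        (Finset.sum_subset (Finset.subset_univ _) h0).symm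
    _ = ∑ k, f (g k) * Function.extend g x 0 (g k) :=
        Finset.sum_image (fun i _ j _ h => hg h)
    _ = ∑ k, f (g k) * x k := by simp [hg.extend_apply]

lemma aux_mulVec_submatrix {R : Type*} [CommRing R] {a b r : ℕ}
    (M : Matrix (Fin b) (Fin a) R) (t : Fin r → Fin b) {g : Fin r → Fin a}
    (hg : Function.Injective g) (x : Fin r → R) (i : Fin r) :
    (M.submatrix t g *ᵥ x) i = (M *ᵥ Function.extend g x 0) (t i) := by
  simp only [Matrix.mulVec, dotProduct, Matrix.submatrix_apply]
  exact (aux_sum_extend_mul hg (fun j => M (t i) j) x).symm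

lemma aux_opnorm_submatrix {a b r : ℕ} (M : Matrix (Fin b) (Fin a) ℝ)
    {t : Fin r → Fin b} (ht : Function.Injective t)
    {g : Fin r → Fin a} (hg : Function.Injective g) :
    ‖LinearMap.toContinuousLinearMap (Matrix.toEuclideanLin (M.submatrix t g))‖ ≤
      ‖LinearMap.toContinuousLinearMap (Matrix.toEuclideanLin M)‖ := by
  classical
  refine ContinuousLinearMap.opNorm_le_bound _ (norm_nonneg _) (fun x => ?_)
  set x' : Fin r → ℝ := WithLp.equiv 2 _ x with hx'
  set y : EuclideanSpace ℝ (Fin a) := (WithLp.equiv 2 _).symm (Function.extend g x' 0) with hy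
  have hyx : ‖y‖ = ‖x‖ := by
    rw [EuclideanSpace.norm_eq, EuclideanSpace.norm_eq]
    congr 1
    have : ∑ j, Function.extend g x' 0 j * Function.extend g x' 0 j
        = ∑ k, Function.extend g x' 0 (g k) * x' k :=
      aux_sum_extend_mul hg (Function.extend g x' 0) x'
    simp only [hg.extend_apply] at this
    have hxx : ∀ k : Fin r, ‖x k‖ ^ 2 = x' k * x' k := fun k => by
      rw [hx']; simp [Real.norm_eq_abs, sq_abs, sq]
    have hyy : ∀ j : Fin a, ‖y j‖ ^ 2 = Function.extend g x' 0 j * Function.extend g x' 0 j :=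
      fun j => by rw [hy]; simp [Real.norm_eq_abs, sq_abs, sq]
    simp only [hxx, hyy]
    exact this
  have hcomp : ∀ i, (Matrix.toEuclideanLin (M.submatrix t g)) x i
      = (Matrix.toEuclideanLin M) y (t i) := by
    intro i
    simp only [Matrix.toEuclideanLin_apply]
    exact aux_mulVec_submatrix M t hg x' i
  have hle : ‖(Matrix.toEuclideanLin (M.submatrix t g)) x‖ ≤ ‖(Matrix.toEuclideanLin M) y‖ := by
    rw [EuclideanSpace.norm_eq, EuclideanSpace.norm_eq]
    apply Real.sqrt_le_sqrt
    calc ∑ i, ‖(Matrix.toEuclideanLin (M.submatrix t g)) x i‖ ^ 2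
        = ∑ i, ‖(Matrix.toEuclideanLin M) y (t i)‖ ^ 2 := by simp only [hcomp]
      _ = ∑ j ∈ Finset.image t Finset.univ, ‖(Matrix.toEuclideanLin M) y j‖ ^ 2 :=
          (Finset.sum_image (f := fun j => ‖(Matrix.toEuclideanLin M) y j‖ ^ 2)
            (fun i _ j _ h => ht h)).symm
      _ ≤ ∑ j, ‖(Matrix.toEuclideanLin M) y j‖ ^ 2 :=
          Finset.sum_le_sum_of_subset_of_nonneg (Finset.subset_univ _)
            (fun j _ _ => by positivity)
  calc ‖(Matrix.toEuclideanLin (M.submatrix t g)) x‖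
      ≤ ‖(Matrix.toEuclideanLin M) y‖ := hle
    _ = ‖(LinearMap.toContinuousLinearMap (Matrix.toEuclideanLin M)) y‖ := rfl
    _ ≤ ‖LinearMap.toContinuousLinearMap (Matrix.toEuclideanLin M)‖ * ‖y‖ :=
        ContinuousLinearMap.le_opNorm _ _
    _ = ‖LinearMap.toContinuousLinearMap (Matrix.toEuclideanLin M)‖ * ‖x‖ := by rw [hyx]

lemma aux_abs_det_le {n : ℕ} (M : Matrix (Fin n) (Fin n) ℝ) (C : ℝ) (hC : 0 ≤ C)
    (h : ‖LinearMap.toContinuousLinearMap (Matrix.toEuclideanLin M)‖ ≤ C) :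
    |M.det| ≤ C ^ n := by
  classical
  have hMv : ∀ v : EuclideanSpace ℝ (Fin n), ‖(Matrix.toEuclideanLin M) v‖ ≤ C * ‖v‖ := by
    intro v
    calc ‖(Matrix.toEuclideanLin M) v‖
        = ‖(LinearMap.toContinuousLinearMap (Matrix.toEuclideanLin M)) v‖ := rfl
      _ ≤ ‖LinearMap.toContinuousLinearMap (Matrix.toEuclideanLin M)‖ * ‖v‖ :=
          ContinuousLinearMap.le_opNorm _ _
      _ ≤ C * ‖v‖ := by gcongr
  set G : Matrix (Fin n) (Fin n) ℝ := Mᵀ * M with hGdef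
  have hG : G.IsHermitian := by
    have := Matrix.isHermitian_conjTranspose_mul_self M
    rwa [Matrix.conjTranspose_eq_transpose_of_trivial] at this
  have hGdet : G.det = M.det ^ 2 := by
    rw [hGdef, Matrix.det_mul, Matrix.det_transpose, sq]
  have heig : ∀ i, hG.eigenvalues i ≤ C ^ 2 := by
    intro i
    set v := hG.eigenvectorBasis i with hv
    have hmv : G *ᵥ ⇑v = hG.eigenvalues i • ⇑v := hG.mulVec_eigenvectorBasis i
    have hnv : ‖v‖ = 1 := hG.eigenvectorBasis.orthonormal.1 i
    have hvv : ⇑v ⬝ᵥ ⇑v = 1 := by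
      have := real_inner_self_eq_norm_sq v
      rw [hnv, PiLp.inner_apply] at this
      simpa [dotProduct, mul_comm, sq] using this
    have h1 : ⇑v ⬝ᵥ (G *ᵥ ⇑v) = hG.eigenvalues i := by
      rw [hmv, dotProduct_smul, smul_eq_mul, hvv, mul_one]
    have h2 : ⇑v ⬝ᵥ (G *ᵥ ⇑v) = (M *ᵥ ⇑v) ⬝ᵥ (M *ᵥ ⇑v) := by
      rw [hGdef, ← Matrix.mulVec_mulVec, Matrix.dotProduct_mulVec, Matrix.vecMul_transpose]
    have h3 : (M *ᵥ ⇑v) ⬝ᵥ (M *ᵥ ⇑v) = ‖(Matrix.toEuclideanLin M) v‖ ^ 2 := by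
      have := real_inner_self_eq_norm_sq ((Matrix.toEuclideanLin M) v)
      rw [← this, Matrix.toEuclideanLin_apply, PiLp.inner_apply]
      simp [ PiLp.inner_apply, dotProduct, mul_comm, sq]
    have h4 : ‖(Matrix.toEuclideanLin M) v‖ ≤ C := by
      have := hMv v
      rwa [hnv, mul_one] at this
    rw [← h1, h2, h3]
    exact pow_le_pow_left₀ (norm_nonneg _) h4 2
  have hpos : ∀ i, 0 ≤ hG.eigenvalues i := fun i => by
    have := Matrix.posSemidef_conjTranspose_mul_self M
    rw [show Mᴴ = Mᵀ from Matrix.ext fun i j => rfl] at this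
    exact this.eigenvalues_nonneg i
  have hdet2 : M.det ^ 2 ≤ (C ^ n) ^ 2 := by
    have := hG.det_eq_prod_eigenvalues
    rw [← hGdet, this]
    calc (∏ i, hG.eigenvalues i) ≤ ∏ _i : Fin n, C ^ 2 :=
          Finset.prod_le_prod (fun i _ => hpos i) (fun i _ => heig i)
      _ = (C ^ n) ^ 2 := by rw [Finset.prod_const, Finset.card_univ, Fintype.card_fin, ← pow_mul,
          ← pow_mul, Nat.mul_comm]
  calc |M.det| = Real.sqrt (M.det ^ 2) := (Real.sqrt_sq_eq_abs _).symm
    _ ≤ Real.sqrt ((C ^ n) ^ 2) := Real.sqrt_le_sqrt hdet2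
    _ = C ^ n := Real.sqrt_sq (by positivity)

lemma aux_selection {a b : ℕ} (A : Matrix (Fin b) (Fin a) ℤ) :
    ∃ (r : ℕ) (g : Fin r → Fin a) (t : Fin r → Fin b),
      Function.Injective g ∧ Function.Injective t ∧ r ≤ a ∧ r ≤ b ∧
      ((A.submatrix t g).map (Int.cast : ℤ → ℝ)).det ≠ 0 ∧
      (∀ x : Fin b → ℤ, x ∈ LinearMap.range (Matrix.toLin' A) →
        (∀ i, x (t i) = 0) → x = 0) := by
  classical
  set Ar : Matrix (Fin b) (Fin a) ℝ := A.map (Int.cast : ℤ → ℝ) with hAr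
  set col : Fin a → (Fin b → ℝ) := fun j i => Ar i j with hcoldef
  obtain ⟨s, hsub, hspan, hind⟩ := exists_linearIndependent ℝ (Set.range col)
  have hsfin : s.Finite := (Set.finite_range col).subset hsub
  letI := hsfin.fintype
  set r := Fintype.card s with hr
  let es : Fin r ≃ s := (Fintype.equivFin s).symm
  set w : Fin r → (Fin b → ℝ) := fun k => (es k : Fin b → ℝ) with hwdef
  have hw : LinearIndependent ℝ w := hind.comp es es.injective
  have hwinj : Function.Injective w := hw.injective
  have hrangew : Set.range w = s := by
    rw [hwdef]
    rw [show (fun k => (es k : Fin b → ℝ)) = Subtype.val ∘ es from rfl, Set.range_comp,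
      Set.range_eq_univ.mpr es.surjective, Set.image_univ, Subtype.range_coe]
  have hspanw : span ℝ (Set.range w) = span ℝ (Set.range col) := by
    rw [hrangew, hspan]
  -- choose columns
  have hgex : ∀ k : Fin r, ∃ j, col j = w k := fun k => hsub (es k).property
  set g : Fin r → Fin a := fun k => (hgex k).choose with hgdef
  have hgspec : ∀ k, col (g k) = w k := fun k => (hgex k).choose_spec
  have hginj : Function.Injective g := by
    intro k k' h
    apply hwinj
    rw [← hgspec k, ← hgspec k', h]
  -- rows
  set rowFun : Fin b → EuclideanSpace ℝ (Fin r) :=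
    fun i => (WithLp.equiv 2 _).symm (fun k => w k i) with hrowdef
  have hrowtop : span ℝ (Set.range rowFun) = ⊤ := by
    by_contra h
    have hbot : (span ℝ (Set.range rowFun))ᗮ ≠ ⊥ := by
      intro hb
      exact h (Submodule.orthogonal_eq_bot_iff.mp hb)
    obtain ⟨u, hu, hune⟩ := Submodule.exists_mem_ne_zero_of_ne_bot hbot
    have hinner : ∀ i, inner ℝ (rowFun i) u = (0 : ℝ) := by
      intro i
      exact (Submodule.mem_orthogonal _ u).mp hu _ (subset_span (Set.mem_range_self i))
    have hcomb : ∑ k, u k • w k = 0 := by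
      funext i
      have h2 := hinner i
      simp only [PiLp.inner_apply, RCLike.inner_apply, conj_trivial, hrowdef,
        WithLp.equiv_symm_apply, PiLp.toLp_apply] at h2
      simp only [Finset.sum_apply, Pi.smul_apply, smul_eq_mul, Pi.zero_apply]
      rw [← h2]
    have := Fintype.linearIndependent_iff.mp hw u hcomb
    exact hune (PiLp.ext fun k => this k)
  obtain ⟨sr, hsubr, hspanr, hindr⟩ := exists_linearIndependent ℝ (Set.range rowFun)
  have hsrfin : sr.Finite := (Set.finite_range rowFun).subset hsubr
  letI := hsrfin.fintype
  let br : Module.Basis sr ℝ (EuclideanSpace ℝ (Fin r)) := Module.Basis.mk hindr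
    (by rw [Subtype.range_coe, hspanr, hrowtop])
  have hcardsr : Fintype.card sr = r := by
    have h1 := Module.finrank_eq_card_basis br
    rw [finrank_euclideanSpace, Fintype.card_fin] at h1
    exact h1.symm
  let er : Fin r ≃ sr := (Fintype.equivFinOfCardEq hcardsr).symm
  have htex : ∀ i : Fin r, ∃ j, rowFun j = (er i : EuclideanSpace ℝ (Fin r)) :=
    fun i => hsubr (er i).property
  set t : Fin r → Fin b := fun i => (htex i).choose with htdef
  have htspec : ∀ i, rowFun (t i) = (er i : EuclideanSpace ℝ (Fin r)) :=
    fun i => (htex i).choose_spec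
  have hindr' : LinearIndependent ℝ (fun (x : sr) => (x : EuclideanSpace ℝ (Fin r))) := hindr
  have htinj : Function.Injective t := by
    intro i i' h
    have : (er i : EuclideanSpace ℝ (Fin r)) = er i' := by
      rw [← htspec i, ← htspec i', h]
    exact er.injective (Subtype.ext this)
  -- the submatrix
  set Br : Matrix (Fin r) (Fin r) ℝ := Ar.submatrix t g with hBr
  have hBrrows : ∀ i, Br i = fun k => (er i : EuclideanSpace ℝ (Fin r)) k := by
    intro i
    funext k
    have h1 : Br i k = col (g k) (t i) := rfl
    rw [h1, hgspec k]
    have := congrFun (congrArg (WithLp.equiv 2 (Fin r → ℝ)) (htspec i)) k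
    exact this
  have hBrunit : IsUnit Br := by
    rw [← Matrix.linearIndependent_rows_iff_isUnit]
    have : (fun i => Br i) = fun i => (WithLp.equiv 2 (Fin r → ℝ)) (er i : EuclideanSpace ℝ (Fin r)) := by
      funext i; exact hBrrows i
    change LinearIndependent ℝ (fun i => Br i)
    rw [this]
    have hwlp : LinearIndependent ℝ (fun (x : sr) => (WithLp.equiv 2 (Fin r → ℝ)) (x : EuclideanSpace ℝ (Fin r))) := by
      have hmap := hindr'.map' ((WithLp.linearEquiv 2 ℝ (Fin r → ℝ)).toLinearMap)
        (LinearEquiv.ker _)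
      exact hmap
    exact hwlp.comp er er.injective
  have hBrdet : Br.det ≠ 0 := (Matrix.isUnit_iff_isUnit_det Br |>.mp hBrunit).ne_zero
  have hBrcols : LinearIndependent ℝ (fun k => (fun i => Br i k)) := by
    have := Matrix.linearIndependent_cols_iff_isUnit.mpr hBrunit
    exact this
  -- key vanishing property
  have hvanish : ∀ x : Fin b → ℤ, x ∈ LinearMap.range (Matrix.toLin' A) →
      (∀ i, x (t i) = 0) → x = 0 := by
    intro x hx hxt
    obtain ⟨u, hu⟩ := hx
    have hxr : (fun i => (x i : ℝ)) ∈ span ℝ (Set.range col) := by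
      rw [← hu]
      have : (fun i => ((Matrix.toLin' A u) i : ℝ)) = ∑ j, (u j : ℝ) • col j := by
        funext i
        simp only [Matrix.toLin'_apply, Matrix.mulVec, dotProduct, Finset.sum_apply,
          Pi.smul_apply, smul_eq_mul, hcoldef, hAr, Matrix.map_apply]
        push_cast
        exact Finset.sum_congr rfl fun j _ => mul_comm _ _
      rw [this]
      exact Submodule.sum_mem _ (fun j _ => Submodule.smul_mem _ _ (subset_span (Set.mem_range_self j)))
    rw [← hspanw] at hxr
    obtain ⟨c, hc⟩ := (mem_span_range_iff_exists_fun ℝ).mp hxr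
    have hsum0 : ∑ k, c k • (fun i => Br i k) = (0 : Fin r → ℝ) := by
      funext i
      have h1 := congrFun hc (t i)
      simp only [Finset.sum_apply, Pi.smul_apply, smul_eq_mul] at h1 ⊢
      rw [hxt i] at h1
      push_cast at h1
      have h2 : ∀ k, Br i k = w k (t i) := fun k => by
        have : Br i k = col (g k) (t i) := rfl
        rw [this, hgspec k]
      simp only [h2, Pi.zero_apply]
      exact h1
    have hczero := Fintype.linearIndependent_iff.mp hBrcols c hsum0
    have hxr0 : (fun i => (x i : ℝ)) = 0 := by
      rw [← hc]
      funext i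
      simp [hczero]
    funext i
    have := congrFun hxr0 i
    simpa using this
  have hra : r ≤ a := by
    have := Fintype.card_le_of_injective g hginj
    simpa using this
  have hrb : r ≤ b := by
    have := Fintype.card_le_of_injective t htinj
    simpa using this
  have hdetfin : ((A.submatrix t g).map (Int.cast : ℤ → ℝ)).det ≠ 0 := by
    have : (A.submatrix t g).map (Int.cast : ℤ → ℝ) = Br := by
      ext i k; rfl
    rw [this]
    exact hBrdet
  exact ⟨r, g, t, hginj, htinj, hra, hrb, hdetfin, hvanish⟩

/-- If `f : ℤᵃ → ℤᵇ` has Euclidean operator norm at most `K` (with `K ≥ 1`), then the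
torsion subgroup of `coker f` has order at most `K^{min(a,b)}`. -/
theorem stmt11 (a b : ℕ) (A : Matrix (Fin b) (Fin a) ℤ) (K : ℝ) (hK : 1 ≤ K)
    (hnorm : ‖LinearMap.toContinuousLinearMap
        (Matrix.toEuclideanLin (A.map (Int.cast : ℤ → ℝ)))‖ ≤ K) :
    (Nat.card (AddCommGroup.torsion ((Fin b → ℤ) ⧸ LinearMap.range (Matrix.toLin' A))) : ℝ) ≤
      K ^ (min a b) := by
  classical
  obtain ⟨r, g, t, hginj, htinj, hra, hrb, hdet, hvanish⟩ := aux_selection A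
  set L := LinearMap.range (Matrix.toLin' A) with hL
  set B : Matrix (Fin r) (Fin r) ℤ := A.submatrix t g with hB
  have hBcast : B.map (Int.cast : ℤ → ℝ) = (A.map (Int.cast : ℤ → ℝ)).submatrix t g := by
    ext i k; rfl
  have hcd : (B.map (Int.cast : ℤ → ℝ)).det = (B.det : ℝ) := by
    simpa [RingHom.mapMatrix_apply] using (RingHom.map_det (Int.castRingHom ℝ) B).symm
  have hBdet : B.det ≠ 0 := by
    intro h
    exact hdet (by rw [hcd, h, Int.cast_zero])
  let π : (Fin b → ℤ) →ₗ[ℤ] (Fin r → ℤ) := LinearMap.funLeft ℤ ℤ t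
  set N0 : Submodule ℤ (Fin r → ℤ) := L.map π with hN0
  have hBle : LinearMap.range (Matrix.toLin' B) ≤ N0 := by
    rintro _ ⟨v, rfl⟩
    refine ⟨Matrix.toLin' A (Function.extend g v 0), ⟨Function.extend g v 0, rfl⟩, ?_⟩
    funext i
    simp only [π, LinearMap.funLeft_apply, Matrix.toLin'_apply]
    exact (aux_mulVec_submatrix A t hginj v i).symm
  have hcard1 : Nat.card ((Fin r → ℤ) ⧸ LinearMap.range (Matrix.toLin' B)) = B.det.natAbs :=
    aux_card_quot_eq_natAbs_det B hBdet
  have hdvd : Nat.card ((Fin r → ℤ) ⧸ N0) ∣ B.det.natAbs := by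
    rw [← hcard1]
    have h1 : Nat.card ((Fin r → ℤ) ⧸ N0) = N0.toAddSubgroup.index :=
      (Submodule.cardQuot_apply N0).symm
    have h2 : Nat.card ((Fin r → ℤ) ⧸ LinearMap.range (Matrix.toLin' B))
        = (LinearMap.range (Matrix.toLin' B)).toAddSubgroup.index :=
      (Submodule.cardQuot_apply _).symm
    rw [h1, h2]
    exact AddSubgroup.index_dvd_of_le ((Submodule.toAddSubgroup_le _ _).mpr hBle)
  have hdetpos : 0 < B.det.natAbs := Int.natAbs_pos.mpr hBdet
  have hcardne : Nat.card ((Fin r → ℤ) ⧸ N0) ≠ 0 := by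
    intro h
    rw [h] at hdvd
    exact absurd (zero_dvd_iff.mp hdvd) hdetpos.ne'
  haveI : Finite ((Fin r → ℤ) ⧸ N0) := Nat.finite_of_card_ne_zero hcardne
  have hker : L ≤ LinearMap.ker (N0.mkQ ∘ₗ π) := by
    intro x hx
    simp only [LinearMap.mem_ker, LinearMap.comp_apply, Submodule.mkQ_apply,
      Submodule.Quotient.mk_eq_zero]
    exact Submodule.mem_map_of_mem hx
  let φ : ((Fin b → ℤ) ⧸ L) →ₗ[ℤ] ((Fin r → ℤ) ⧸ N0) := L.liftQ (N0.mkQ ∘ₗ π) hker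
  have hphiinj : ∀ q : (Fin b → ℤ) ⧸ L, q ∈ AddCommGroup.torsion ((Fin b → ℤ) ⧸ L) →
      φ q = 0 → q = 0 := by
    intro q hq hphi
    obtain ⟨y, rfl⟩ := Submodule.Quotient.mk_surjective L q
    have hord : IsOfFinAddOrder (Submodule.Quotient.mk (p := L) y) := hq
    obtain ⟨n, hn, hny⟩ := hord.exists_nsmul_eq_zero
    have hnyL : (n : ℤ) • y ∈ L := by
      have : Submodule.Quotient.mk (p := L) ((n : ℤ) • y) = 0 := by
        rw [Submodule.Quotient.mk_smul, natCast_zsmul]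
        exact hny
      exact (Submodule.Quotient.mk_eq_zero L).mp this
    have hpiy : π y ∈ N0 := by
      have : φ (Submodule.Quotient.mk y) = Submodule.Quotient.mk (π y) := rfl
      rw [this] at hphi
      exact (Submodule.Quotient.mk_eq_zero N0).mp hphi
    obtain ⟨l, hl, hlpi⟩ := hpiy
    set z : Fin b → ℤ := y - l with hz
    have hpz : ∀ i, z (t i) = 0 := by
      intro i
      have : π z = 0 := by
        simp only [hz, map_sub, hlpi, sub_self]
      exact congrFun this i
    have hnz : (n : ℤ) • z ∈ L := by
      rw [hz, smul_sub]
      exact Submodule.sub_mem L hnyL (Submodule.smul_mem L _ hl)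
    have hzzero : (n : ℤ) • z = 0 := by
      apply hvanish _ hnz
      intro i
      simp [Pi.smul_apply, hpz i]
    have hz0 : z = 0 := by
      have hn0 : (n : ℤ) ≠ 0 := Int.natCast_ne_zero.mpr hn.ne'
      exact (smul_eq_zero.mp hzzero).resolve_left hn0
    have : y = l := by rwa [hz, sub_eq_zero] at hz0
    rw [this]
    exact (Submodule.Quotient.mk_eq_zero L).mpr hl
  have hcardle : Nat.card (AddCommGroup.torsion ((Fin b → ℤ) ⧸ L)) ≤
      Nat.card ((Fin r → ℤ) ⧸ N0) := by
    apply Nat.card_le_card_of_injective (fun q => φ q.val)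
    intro q q' h
    have h' : φ (q : (Fin b → ℤ) ⧸ L) = φ (q' : (Fin b → ℤ) ⧸ L) := h
    have hsub : φ ((q : (Fin b → ℤ) ⧸ L) - q') = 0 := by
      rw [map_sub, h', sub_self]
    have hmem : ((q : (Fin b → ℤ) ⧸ L) - q') ∈ AddCommGroup.torsion ((Fin b → ℤ) ⧸ L) :=
      sub_mem q.2 q'.2
    have := hphiinj _ hmem hsub
    exact Subtype.ext (sub_eq_zero.mp this)
  have hchain : Nat.card (AddCommGroup.torsion ((Fin b → ℤ) ⧸ L)) ≤ B.det.natAbs :=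
    le_trans hcardle (Nat.le_of_dvd hdetpos hdvd)
  have hreal : (B.det.natAbs : ℝ) ≤ K ^ r := by
    have h1 : (B.det.natAbs : ℝ) = |((B.map (Int.cast : ℤ → ℝ)).det)| := by
      rw [hcd, Nat.cast_natAbs, Int.cast_abs]
    rw [h1]
    apply aux_abs_det_le _ _ (le_trans zero_le_one hK)
    rw [hBcast]
    exact le_trans (aux_opnorm_submatrix _ htinj hginj) hnorm
  calc (Nat.card (AddCommGroup.torsion ((Fin b → ℤ) ⧸ L)) : ℝ)
      ≤ (B.det.natAbs : ℝ) := by exact_mod_cast hchain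
    _ ≤ K ^ r := hreal
    _ ≤ K ^ (min a b) := pow_le_pow_right₀ hK (le_min hra hrb)
end

section
/- Minkowski sum of polytopes up to translation is a cancellative commutative monoid: if P, Q, R are convex polytopes in a finite-dimensional real vector space and P + Q is a translate of P + R, then Q is a translate of R. -/
open Pointwise

section Aux

/-- In an additive commutative group, translation is Minkowski addition by a singleton. -/
lemma aux_vadd_set_eq {G : Type*} [AddCommGroup G] (a : G) (X : Set G) :
    a +ᵥ X = {a} + X := by
  rw [Set.singleton_add]
  rfl

variable {E : Type*} [NormedAddCommGroup E] [NormedSpace ℝ E]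

/-- Two compact convex nonempty sets with the same support function are equal. -/
lemma aux_eq_of_support_eq {A B : Set E} (hAc : IsCompact A) (hBc : IsCompact B)
    (hAco : Convex ℝ A) (hBco : Convex ℝ B) (hAne : A.Nonempty) (hBne : B.Nonempty)
    (h : ∀ f : E →L[ℝ] ℝ, sSup (f '' A) = sSup (f '' B)) : A = B := by
  have key : ∀ (A B : Set E), IsCompact A → IsCompact B → Convex ℝ B → A.Nonempty → B.Nonempty →
      (∀ f : E →L[ℝ] ℝ, sSup (f '' A) = sSup (f '' B)) → A ⊆ B := by
    intro A B hAc hBc hBco hAne hBne h x hx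
    by_contra hxB
    obtain ⟨f, c, hc1, hc2⟩ := geometric_hahn_banach_closed_point hBco hBc.isClosed hxB
    have h1 : sSup (f '' B) ≤ c :=
      csSup_le (hBne.image f) (by rintro _ ⟨b, hb, rfl⟩; exact (hc1 b hb).le)
    have h2 : f x ≤ sSup (f '' A) :=
      le_csSup (hAc.image f.continuous).bddAbove ⟨x, hx, rfl⟩
    have := h f
    linarith
  exact subset_antisymm (key A B hAc hBc hBco hAne hBne h)
    (key B A hBc hAc hAco hBne hAne fun f => (h f).symm)

lemma aux_sSup_image_add {A B : Set E} (hAc : IsCompact A) (hBc : IsCompact B)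
    (hAne : A.Nonempty) (hBne : B.Nonempty) (f : E →L[ℝ] ℝ) :
    sSup (f '' (A + B)) = sSup (f '' A) + sSup (f '' B) := by
  rw [Set.image_add, csSup_add (hAne.image f) (hAc.image f.continuous).bddAbove
    (hBne.image f) (hBc.image f.continuous).bddAbove]

/-- The cancellation law for Minkowski sums of compact convex sets in a normed space. -/
lemma aux_cancel {S T U : Set E} (hSc : IsCompact S) (hTc : IsCompact T) (hUc : IsCompact U)
    (hSco : Convex ℝ S) (hTco : Convex ℝ T) (hUco : Convex ℝ U)
    (hSne : S.Nonempty) (hTne : T.Nonempty) (hUne : U.Nonempty) (v : E)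
    (h : S + T = v +ᵥ (S + U)) : T = v +ᵥ U := by
  rw [aux_vadd_set_eq] at h ⊢
  have hvc : IsCompact ({v} : Set E) := isCompact_singleton
  have hvne : ({v} : Set E).Nonempty := Set.singleton_nonempty v
  have hvUc : IsCompact ({v} + U : Set E) := by
    rw [Set.singleton_add]
    exact hUc.image (continuous_add_left v)
  have hvUco : Convex ℝ ({v} + U : Set E) := by
    rw [Set.singleton_add]
    exact hUco.translate v
  have hvUne : ({v} + U : Set E).Nonempty := by
    rw [Set.singleton_add]
    exact hUne.image _
  apply aux_eq_of_support_eq hTc hvUc hTco hvUco hTne hvUne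
  intro f
  have key := congrArg (fun W => sSup (f '' W)) h
  rw [aux_sSup_image_add hSc hTc hSne hTne,
    aux_sSup_image_add hvc (hSc.add hUc) hvne (hSne.add hUne),
    aux_sSup_image_add hSc hUc hSne hUne] at key
  rw [aux_sSup_image_add hvc hUc hvne hUne]
  linarith

end Aux

/-- Minkowski sum of polytopes up to translation is cancellative: if `P + Q` is a translate
of `P + R` for polytopes `P`, `Q`, `R` in a finite-dimensional real vector space, then `Q`
is a translate of `R`. -/
theorem stmt18 (V : Type) [AddCommGroup V] [Module ℝ V] [FiniteDimensional ℝ V]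
    (s t u : Finset V) (hs : s.Nonempty) (ht : t.Nonempty) (hu : u.Nonempty)
    (v : V)
    (h : convexHull ℝ (s : Set V) + convexHull ℝ (t : Set V) =
      v +ᵥ (convexHull ℝ (s : Set V) + convexHull ℝ (u : Set V))) :
    ∃ w : V, convexHull ℝ (t : Set V) = w +ᵥ convexHull ℝ (u : Set V) := by
  classical
  set n := Module.finrank ℝ V with hn
  let e : V ≃ₗ[ℝ] (Fin n → ℝ) := (Module.finBasis ℝ V).equivFun
  let f : V →ₗ[ℝ] (Fin n → ℝ) := e.toLinearMap
  have hcompact : ∀ w : Finset V, IsCompact (convexHull ℝ (f '' (w : Set V))) := fun w =>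
    (w.finite_toSet.image f).isCompact_convexHull ℝ
  have hne : ∀ w : Finset V, w.Nonempty → (convexHull ℝ (f '' (w : Set V))).Nonempty :=
    fun w hw => ((hw.to_set.image f)).mono (subset_convexHull ℝ _)
  have hE : convexHull ℝ (f '' (s : Set V)) + convexHull ℝ (f '' (t : Set V)) =
      f v +ᵥ (convexHull ℝ (f '' (s : Set V)) + convexHull ℝ (f '' (u : Set V))) := by
    have h2 := congrArg (fun X => f '' X) h
    rw [aux_vadd_set_eq] at h2
    rw [Set.image_add, Set.image_add, Set.image_add, Set.image_singleton] at h2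
    rw [f.image_convexHull, f.image_convexHull, f.image_convexHull] at h2
    rw [aux_vadd_set_eq]
    exact h2
  have key := aux_cancel (hcompact s) (hcompact t) (hcompact u)
    (convex_convexHull ℝ _) (convex_convexHull ℝ _) (convex_convexHull ℝ _)
    (hne s hs) (hne t ht) (hne u hu) (f v) hE
  refine ⟨v, ?_⟩
  apply Set.image_injective.2 e.injective
  show f '' _ = f '' _
  rw [f.image_convexHull, aux_vadd_set_eq, Set.image_add,
    Set.image_singleton, f.image_convexHull, ← aux_vadd_set_eq]
  exact key
end
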